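/- Let Y be a closed infinite-dimensional subspace of E_X and suppose that the restriction of Q_X to Y is strictly singular, i.e. for every infinite-dimensional closed subspace Z of Y and every c > 0 there exists z ∈ Z with ‖Q_X(z)‖_X < c·‖z‖_E. Then Y contains a sequence which is equivalent to the standard unit vector basis of c₀. -/

import Mathlib

set_option maxHeartbeats 2000000 in
/-- If `Y` is a closed infinite-dimensional subspace of `E_X`
on which the quotient operator `Q_X` is strictly singular, then `Y` contains a
sequence equivalent to the standard unit vector basis of `c₀`. -/
theorem stmt_6 {X : Type*} [NormedAddCommGroup X] [NormedSpace ℝ X] [CompleteSpace X]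
    (x : ℕ → X) (hx1 : ∀ n, ‖x n‖ = 1)
    (hxd : ∀ y : X, ‖y‖ = 1 → ∀ ε : ℝ, 0 < ε → ∃ n, ‖y - x n‖ < ε)
    {E : Type*} [NormedAddCommGroup E] [NormedSpace ℝ E] [CompleteSpace E]
    (ι : (ℕ →₀ ℝ) →ₗ[ℝ] E) (hιd : DenseRange ι)
    (hnorm : ∀ z : ℕ →₀ ℝ,
      ‖ι z‖ = ⨆ m : ℕ, ‖∑ n ∈ Finset.range (m + 1), z n • x n‖)
    (Q : E →L[ℝ] X) (hQ : ∀ n, Q (ι (Finsupp.single n 1)) = x n)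
    -- `Y` is a closed infinite-dimensional subspace of `E_X`
    (Y : Submodule ℝ E) (hYc : IsClosed (Y : Set E)) (hYinf : ¬ FiniteDimensional ℝ Y)
    -- the restriction of `Q` to `Y` is strictly singular
    (hss : ∀ Z : Submodule ℝ E, Z ≤ Y → IsClosed (Z : Set E) → ¬ FiniteDimensional ℝ Z →
      ∀ c : ℝ, 0 < c → ∃ z ∈ Z, ‖Q z‖ < c * ‖z‖) :
    -- `Y` contains a sequence equivalent to the unit vector basis of `c₀`
    ∃ u : ℕ → E, (∀ k, u k ∈ Y) ∧
      ∃ M : ℝ, 1 ≤ M ∧ ∀ (j : ℕ) (a : ℕ → ℝ),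
        M⁻¹ * (Finset.range (j + 1)).sup' Finset.nonempty_range_add_one (fun k => |a k|)
            ≤ ‖∑ k ∈ Finset.range (j + 1), a k • u k‖ ∧
        ‖∑ k ∈ Finset.range (j + 1), a k • u k‖
            ≤ M * (Finset.range (j + 1)).sup' Finset.nonempty_range_add_one (fun k => |a k|) := by
  classical
  set S : (ℕ →₀ ℝ) → ℕ → X := fun z m => ∑ n ∈ Finset.range (m + 1), z n • x n with hSdef
  have hnormS : ∀ z : ℕ →₀ ℝ, ‖ι z‖ = ⨆ m : ℕ, ‖S z m‖ := by
    simp only [hSdef]; exact hnorm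
  -- ℓ¹ bound on partial sums
  have hl1 : ∀ (z : ℕ →₀ ℝ) (m : ℕ), ‖S z m‖ ≤ ∑ n ∈ z.support, |z n| := by
    intro z m
    calc ‖S z m‖ ≤ ∑ n ∈ Finset.range (m + 1), ‖z n • x n‖ := norm_sum_le _ _
      _ = ∑ n ∈ Finset.range (m + 1), |z n| := by
          refine Finset.sum_congr rfl fun n _ => ?_
          rw [norm_smul, hx1, mul_one, Real.norm_eq_abs]
      _ = ∑ n ∈ Finset.range (m + 1) ∩ z.support, |z n| := by
          refine (Finset.sum_subset Finset.inter_subset_left fun n hn hn' => ?_).symm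
          have : n ∉ z.support := fun h => hn' (Finset.mem_inter.mpr ⟨hn, h⟩)
          rw [Finsupp.notMem_support_iff.mp this, abs_zero]
      _ ≤ ∑ n ∈ z.support, |z n| :=
          Finset.sum_le_sum_of_subset_of_nonneg Finset.inter_subset_right
            fun n _ _ => abs_nonneg _
  have hbdd : ∀ z : ℕ →₀ ℝ, BddAbove (Set.range fun m => ‖S z m‖) := fun z =>
    ⟨∑ n ∈ z.support, |z n|, by rintro _ ⟨m, rfl⟩; exact hl1 z m⟩
  have hS_le : ∀ (z : ℕ →₀ ℝ) (m : ℕ), ‖S z m‖ ≤ ‖ι z‖ := fun z m => by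
    rw [hnormS]; exact le_ciSup (hbdd z) m
  have hl1' : ∀ z : ℕ →₀ ℝ, ‖ι z‖ ≤ ∑ n ∈ z.support, |z n| := fun z => by
    rw [hnormS]; exact ciSup_le (hl1 z)
  -- Q on the range of ι
  have hQι : ∀ z : ℕ →₀ ℝ, Q (ι z) = ∑ n ∈ z.support, z n • x n := by
    intro z
    conv_lhs => rw [← Finsupp.sum_single z]
    rw [Finsupp.sum, map_sum, map_sum]
    refine Finset.sum_congr rfl fun n hn => ?_
    have h1 : Finsupp.single n (z n) = z n • Finsupp.single n (1 : ℝ) := by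
      rw [Finsupp.smul_single, smul_eq_mul, mul_one]
    rw [h1, map_smul, map_smul, hQ]
  -- coordinate estimates
  have hcoord : ∀ (z : ℕ →₀ ℝ) (n : ℕ), |z n| ≤ 2 * ‖ι z‖ := by
    intro z n
    have h0 : ∀ m : ℕ, ‖z m • x m‖ = |z m| := fun m => by
      rw [norm_smul, hx1, mul_one, Real.norm_eq_abs]
    cases n with
    | zero =>
        have h1 : S z 0 = z 0 • x 0 := by simp [hSdef]
        have := hS_le z 0
        rw [h1, h0] at this
        nlinarith [norm_nonneg (ι z)]
    | succ n =>
        have h1 : S z (n + 1) - S z n = z (n + 1) • x (n + 1) := by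
          simp [hSdef, Finset.sum_range_succ]
        calc |z (n + 1)| = ‖S z (n + 1) - S z n‖ := by rw [h1, h0]
          _ ≤ ‖S z (n + 1)‖ + ‖S z n‖ := norm_sub_le _ _
          _ ≤ ‖ι z‖ + ‖ι z‖ := add_le_add (hS_le _ _) (hS_le _ _)
          _ = 2 * ‖ι z‖ := by ring
  have hinj : Function.Injective ι := by
    intro a b hab
    have h1 : ι (a - b) = 0 := by rw [map_sub, hab, sub_self]
    have h2 : a - b = 0 := by
      ext n
      have := hcoord (a - b) n
      rw [h1, norm_zero, mul_zero] at this
      simpa using abs_nonpos_iff.mp this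
    exact sub_eq_zero.mp h2
  -- the coordinate functionals
  set D : Submodule ℝ E := LinearMap.range ι with hD
  have hDdense : Dense (D : Set E) := by rw [hD, LinearMap.coe_range]; exact hιd
  have hDr : DenseRange (D.subtypeL : D →L[ℝ] E) := by
    have h1 : Set.range (D.subtypeL : D →L[ℝ] E) = (D : Set E) := Subtype.range_coe
    unfold DenseRange
    rw [h1]; exact hDdense
  have hDui : IsUniformInducing (D.subtypeL : D →L[ℝ] E) :=
    isometry_subtype_coe.isUniformInducing
  have hcoordD : ∀ (n : ℕ) (d : D),
      ‖((Finsupp.lapply n : (ℕ →₀ ℝ) →ₗ[ℝ] ℝ).comp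
        ((LinearEquiv.ofInjective ι hinj).symm : D →ₗ[ℝ] (ℕ →₀ ℝ))) d‖ ≤ 2 * ‖d‖ := by
    intro n d
    set z := (LinearEquiv.ofInjective ι hinj).symm d with hz
    have h1 : ι z = (d : E) := by
      rw [hz]; exact LinearEquiv.ofInjective_symm_apply (f := ι) (h := hinj) d
    simp only [LinearMap.comp_apply, Finsupp.lapply_apply, Real.norm_eq_abs]
    calc |z n| ≤ 2 * ‖ι z‖ := hcoord z n
      _ = 2 * ‖d‖ := by rw [h1]; rfl
  set f : ℕ → E →L[ℝ] ℝ := fun n =>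
    (LinearMap.mkContinuous _ 2 (hcoordD n)).extend D.subtypeL with hf
  have hfι : ∀ (n : ℕ) (z : ℕ →₀ ℝ), f n (ι z) = z n := by
    intro n z
    have h1 : ι z = D.subtypeL ((LinearEquiv.ofInjective ι hinj) z) := by
      rw [Submodule.coe_subtypeL']
      exact (LinearEquiv.ofInjective_apply (h := hinj) ι z).symm
    rw [hf]
    simp only []
    rw [h1, ContinuousLinearMap.extend_eq _ hDr hDui, LinearMap.mkContinuous_apply,
      LinearMap.comp_apply, LinearEquiv.coe_coe, LinearEquiv.symm_apply_apply,
      Finsupp.lapply_apply]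
  have hfb : ∀ (n : ℕ) (e : E), |f n e| ≤ 2 * ‖e‖ := by
    intro n
    have hcl : IsClosed {e : E | |f n e| ≤ 2 * ‖e‖} :=
      isClosed_le ((f n).continuous.abs) (continuous_const.mul continuous_norm)
    have hsub : (D : Set E) ⊆ {e : E | |f n e| ≤ 2 * ‖e‖} := by
      rintro e he
      obtain ⟨z, rfl⟩ := LinearMap.mem_range.mp he
      simp only [Set.mem_setOf_eq, hfι]
      exact hcoord z n
    intro e
    have h1 : e ∈ closure (D : Set E) := by rw [hDdense.closure_eq]; trivial
    exact hcl.closure_subset_iff.mpr hsub h1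
  -- constants
  set θ : ℕ → ℝ := fun k => (1/64) * (1/2)^k with hθdef
  have hθpos : ∀ k, 0 < θ k := fun k => by positivity
  set δ : ℕ → ℝ := fun k => θ k / (1 + ‖Q‖) with hδdef
  have hQ1 : (0:ℝ) < 1 + ‖Q‖ := by positivity
  have hδpos : ∀ k, 0 < δ k := fun k => div_pos (hθpos k) hQ1
  have hδθ : ∀ k, δ k ≤ θ k := fun k => by
    rw [hδdef]
    exact div_le_self (hθpos k).le (by nlinarith [norm_nonneg Q])
  have hQδ : ∀ k, ‖Q‖ * δ k ≤ θ k := fun k => by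
    rw [hδdef]
    simp only []
    rw [mul_comm, div_mul_eq_mul_div, div_le_iff₀ hQ1]
    nlinarith [norm_nonneg Q, (hθpos k).le]
  have hθsum : ∀ j : ℕ, ∑ k ∈ Finset.range (j+1), θ k ≤ 1/32 := by
    intro j
    rw [hθdef]
    simp only []
    rw [← Finset.mul_sum]
    have := sum_geometric_two_le (j+1)
    nlinarith
  have hθ64 : ∀ k, θ k ≤ 1/64 := fun k => by
    rw [hθdef]
    have h1 : ((1:ℝ)/2)^k ≤ 1 := pow_le_one₀ (by norm_num) (by norm_num)
    nlinarith
  -- the inductive step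
  have step : ∀ k p₀ : ℕ, ∃ (yk : E) (wk : ℕ →₀ ℝ) (p₁ : ℕ),
      p₀ < p₁ ∧ yk ∈ Y ∧ ‖yk‖ = 1 ∧ ‖Q yk‖ < θ k ∧ ‖yk - ι wk‖ ≤ δ k ∧
      ∀ n, wk n ≠ 0 → p₀ < n ∧ n ≤ p₁ := by
    intro k p₀
    set ψ : E →ₗ[ℝ] (Fin (p₀+1) → ℝ) :=
      LinearMap.pi (fun i : Fin (p₀+1) => (f i : E →ₗ[ℝ] ℝ)) with hψ
    set Z := Y ⊓ LinearMap.ker ψ with hZ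
    have hZY : Z ≤ Y := inf_le_left
    have hZc : IsClosed (Z : Set E) := by
      have h1 : (Z : Set E) = (Y : Set E) ∩ ⋂ i : Fin (p₀+1), {e : E | f i e = 0} := by
        ext e
        simp [hZ, hψ, LinearMap.mem_ker, funext_iff, Set.mem_iInter]
      rw [h1]
      exact hYc.inter (isClosed_iInter fun i =>
        isClosed_eq (f i).continuous continuous_const)
    have hZi : ¬ FiniteDimensional ℝ Z := by
      intro hfin
      apply hYinf
      have h1 : (Submodule.map ψ Y).FG := by
        have : FiniteDimensional ℝ (Submodule.map ψ Y) :=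
          FiniteDimensional.finiteDimensional_submodule _
        exact Module.Finite.iff_fg.mp this
      have h2 : (Y ⊓ LinearMap.ker ψ).FG := Module.Finite.iff_fg.mp hfin
      exact Module.Finite.iff_fg.mpr (Submodule.fg_of_fg_map_of_fg_inf_ker ψ h1 h2)
    obtain ⟨z, hzZ, hzQ⟩ := hss Z hZY hZc hZi (θ k) (hθpos k)
    have hz0 : z ≠ 0 := by
      rintro rfl
      simp only [map_zero, norm_zero, mul_zero] at hzQ
      exact lt_irrefl 0 hzQ
    have hznorm : (0:ℝ) < ‖z‖ := norm_pos_iff.mpr hz0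
    set yk := ‖z‖⁻¹ • z with hyk
    have hyk1 : ‖yk‖ = 1 := by
      rw [hyk, norm_smul, norm_inv, norm_norm, inv_mul_cancel₀ hznorm.ne']
    have hykY : yk ∈ Y := Y.smul_mem _ (hZY hzZ)
    have hykQ : ‖Q yk‖ < θ k := by
      rw [hyk, map_smul, norm_smul, norm_inv, norm_norm]
      rw [inv_mul_lt_iff₀ hznorm, mul_comm]
      exact hzQ
    have hker : ∀ n ≤ p₀, f n yk = 0 := by
      intro n hn
      have hzk : ψ z = 0 := hzZ.2
      have h1 : f n z = 0 := by
        have := congrFun hzk ⟨n, by omega⟩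
        simpa [hψ] using this
      rw [hyk, map_smul, h1, smul_zero]
    -- approximate by a finitely supported vector
    set d := δ k / (2*(p₀:ℝ)+3) with hd
    have hdpos : 0 < d := by
      rw [hd]; positivity
    obtain ⟨v, hvmem, hv⟩ := Metric.mem_closure_iff.mp (hιd yk) d hdpos
    obtain ⟨w₀, rfl⟩ := hvmem
    rw [dist_eq_norm] at hv
    -- truncate
    set wk := w₀.filter (fun n => p₀ < n) with hwk
    have hsupp1 : ∀ n, wk n ≠ 0 → p₀ < n := by
      intro n h
      by_contra hc
      rw [hwk, Finsupp.filter_apply_neg _ _ hc] at h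
      exact h rfl
    set p₁ := max (p₀ + 1) (wk.support.sup id) with hp₁def
    have hp₁ : p₀ < p₁ := lt_of_lt_of_le (Nat.lt_succ_self _) (le_max_left _ _)
    have hsupp2 : ∀ n, wk n ≠ 0 → n ≤ p₁ := by
      intro n h
      exact le_trans (Finset.le_sup (f := id) (Finsupp.mem_support_iff.mpr h))
        (le_max_right _ _)
    -- the truncation error
    have htrunc : ‖yk - ι wk‖ ≤ δ k := by
      set r := w₀.filter (fun n => ¬ p₀ < n) with hr
      have hq' : ∀ n, r n ≠ 0 → ¬ p₀ < n := by
        intro n hn0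
        by_contra hc
        have : r n = 0 := by
          rw [hr]; exact Finsupp.filter_apply_neg _ _ (not_not_intro hc)
        exact hn0 this
      have hsum : wk + r = w₀ := Finsupp.filter_pos_add_filter_neg w₀ _
      have hrcoord : ∀ n ∈ r.support, |r n| ≤ 2 * d := by
        intro n hn
        have hn0 : r n ≠ 0 := Finsupp.mem_support_iff.mp hn
        have hq : ¬ p₀ < n := hq' n hn0
        have hrn : r n = w₀ n := by rw [hr]; exact Finsupp.filter_apply_pos _ _ hq
        have h0 : f n yk = 0 := hker n (Nat.le_of_not_lt hq)
        rw [hrn]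
        calc |w₀ n| = |f n (ι w₀ - yk)| := by rw [map_sub, hfι, h0, sub_zero]
          _ ≤ 2 * ‖ι w₀ - yk‖ := hfb n _
          _ = 2 * ‖yk - ι w₀‖ := by rw [norm_sub_rev]
          _ ≤ 2 * d := by nlinarith [hv]
      have hsubr : r.support ⊆ Finset.range (p₀ + 1) := by
        intro n hn
        have := hq' n (Finsupp.mem_support_iff.mp hn)
        rw [Finset.mem_range]
        omega
      have hιr : ‖ι r‖ ≤ ((p₀:ℝ) + 1) * (2 * d) := by
        calc ‖ι r‖ ≤ ∑ n ∈ r.support, |r n| := hl1' r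
          _ ≤ r.support.card • (2 * d) := Finset.sum_le_card_nsmul _ _ _ hrcoord
          _ = (r.support.card : ℝ) * (2 * d) := nsmul_eq_mul _ _
          _ ≤ ((p₀:ℝ) + 1) * (2 * d) := by
              have hc := Finset.card_le_card hsubr
              rw [Finset.card_range] at hc
              have hcc : (r.support.card : ℝ) ≤ (p₀:ℝ) + 1 := by exact_mod_cast hc
              nlinarith [hdpos]
      have hwr : ι w₀ - ι wk = ι r := by
        rw [← hsum, map_add]; abel
      have hne : (2*(p₀:ℝ)+3) ≠ 0 := by positivity
      calc ‖yk - ι wk‖ = ‖(yk - ι w₀) + (ι w₀ - ι wk)‖ := by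
            rw [sub_add_sub_cancel]
        _ ≤ ‖yk - ι w₀‖ + ‖ι w₀ - ι wk‖ := norm_add_le _ _
        _ ≤ d + ((p₀:ℝ) + 1) * (2 * d) := add_le_add hv.le (hwr ▸ hιr)
        _ = d * (2 * (p₀:ℝ) + 3) := by ring
        _ = δ k := by rw [hd]; field_simp
    exact ⟨yk, wk, p₁, hp₁, hykY, hyk1, hykQ, htrunc, fun n h => ⟨hsupp1 n h, hsupp2 n h⟩⟩
  choose yF wF pF h1 h2 h3 h4 h5 h6 using step
  set g : ℕ → ℕ := fun k => Nat.rec 0 (fun k ih => pF k ih) k with hg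
  have hgs : ∀ k, g (k+1) = pF k (g k) := fun k => rfl
  set y : ℕ → E := fun k => yF k (g k) with hy
  set w : ℕ → (ℕ →₀ ℝ) := fun k => wF k (g k) with hw
  have pmono : StrictMono g := strictMono_nat_of_lt_succ (fun k => by
    rw [hgs]; exact h1 k (g k))
  have hyY : ∀ k, y k ∈ Y := fun k => h2 k (g k)
  have hy1 : ∀ k, ‖y k‖ = 1 := fun k => h3 k (g k)
  have hyQ : ∀ k, ‖Q (y k)‖ < θ k := fun k => h4 k (g k)
  have hyw : ∀ k, ‖y k - ι (w k)‖ ≤ δ k := fun k => h5 k (g k)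
  have hwsupp : ∀ k n, w k n ≠ 0 → g k < n ∧ n ≤ g (k+1) := fun k n h => by
    have := h6 k (g k) n h
    rwa [← hgs] at this
  -- consequences of the construction
  have hQw : ∀ k, ‖Q (ι (w k))‖ ≤ 2 * θ k := by
    intro k
    have h1 : Q (ι (w k)) = Q (y k) - Q (y k - ι (w k)) := by rw [map_sub]; abel
    have h2 : ‖Q (y k - ι (w k))‖ ≤ ‖Q‖ * δ k :=
      le_trans (Q.le_opNorm _) (mul_le_mul_of_nonneg_left (hyw k) (norm_nonneg _))
    calc ‖Q (ι (w k))‖ = ‖Q (y k) - Q (y k - ι (w k))‖ := by rw [h1]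
      _ ≤ ‖Q (y k)‖ + ‖Q (y k - ι (w k))‖ := norm_sub_le _ _
      _ ≤ θ k + θ k := add_le_add (hyQ k).le (le_trans h2 (hQδ k))
      _ = 2 * θ k := by ring
  have hwn_le : ∀ k, ‖ι (w k)‖ ≤ 1 + θ k := by
    intro k
    calc ‖ι (w k)‖ = ‖y k - (y k - ι (w k))‖ := by rw [sub_sub_cancel]
      _ ≤ ‖y k‖ + ‖y k - ι (w k)‖ := norm_sub_le _ _
      _ ≤ 1 + θ k := by rw [hy1 k]; exact add_le_add_right (le_trans (hyw k) (hδθ k)) 1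
  have hwn_ge : ∀ k, 1 - θ k ≤ ‖ι (w k)‖ := by
    intro k
    have h1 : ‖y k‖ - ‖y k - ι (w k)‖ ≤ ‖ι (w k)‖ := by
      have h2 : ‖y k‖ ≤ ‖y k - ι (w k)‖ + ‖ι (w k)‖ := by
        calc ‖y k‖ = ‖(y k - ι (w k)) + ι (w k)‖ := by rw [sub_add_cancel]
          _ ≤ _ := norm_add_le _ _
      linarith
    rw [hy1 k] at h1
    have := le_trans (hyw k) (hδθ k)
    linarith
  have hfull : ∀ k m, g (k+1) ≤ m → S (w k) m = Q (ι (w k)) := by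
    intro k m hm
    rw [hQι, hSdef]
    simp only []
    refine (Finset.sum_subset ?_ ?_).symm
    · intro n hn
      rw [Finset.mem_range]
      have := (hwsupp k n (Finsupp.mem_support_iff.mp hn)).2
      omega
    · intro n _ hn
      rw [Finsupp.notMem_support_iff.mp hn, zero_smul]
  have hzero : ∀ k m, m ≤ g k → S (w k) m = 0 := by
    intro k m hm
    rw [hSdef]
    simp only []
    refine Finset.sum_eq_zero fun n hn => ?_
    rw [Finset.mem_range] at hn
    have h1 : w k n = 0 := by
      by_contra h
      have := (hwsupp k n h).1
      omega
    rw [h1, zero_smul]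
  have hSbd : ∀ k m, ‖S (w k) m‖ ≤ 2 := by
    intro k m
    have := hθ64 k
    calc ‖S (w k) m‖ ≤ ‖ι (w k)‖ := hS_le _ _
      _ ≤ 1 + θ k := hwn_le k
      _ ≤ 2 := by linarith
  have hswap : ∀ (j m : ℕ) (a : ℕ → ℝ),
      S (∑ k ∈ Finset.range (j+1), a k • w k) m
        = ∑ k ∈ Finset.range (j+1), a k • S (w k) m := by
    intro j m a
    rw [hSdef]
    simp only []
    calc ∑ n ∈ Finset.range (m+1), (∑ k ∈ Finset.range (j+1), a k • w k) n • x n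
        = ∑ n ∈ Finset.range (m+1), ∑ k ∈ Finset.range (j+1), (a k * w k n) • x n := by
          refine Finset.sum_congr rfl fun n _ => ?_
          rw [Finsupp.finset_sum_apply, Finset.sum_smul]
          refine Finset.sum_congr rfl fun k _ => ?_
          rw [Finsupp.smul_apply, smul_eq_mul]
      _ = ∑ k ∈ Finset.range (j+1), ∑ n ∈ Finset.range (m+1), (a k * w k n) • x n :=
          Finset.sum_comm
      _ = ∑ k ∈ Finset.range (j+1), a k • S (w k) m := by
          refine Finset.sum_congr rfl fun k _ => ?_
          rw [hSdef]
          simp only [Finset.smul_sum]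
          exact Finset.sum_congr rfl fun n _ => (mul_smul _ _ _)
  have hιsum : ∀ (j : ℕ) (a : ℕ → ℝ),
      ι (∑ k ∈ Finset.range (j+1), a k • w k) = ∑ k ∈ Finset.range (j+1), a k • ι (w k) := by
    intro j a
    rw [map_sum]
    exact Finset.sum_congr rfl fun k _ => map_smul ι _ _
  -- conclusion
  refine ⟨y, hyY, 4, by norm_num, ?_⟩
  intro j a
  set A := (Finset.range (j + 1)).sup' Finset.nonempty_range_add_one (fun k => |a k|) with hA
  have hAk : ∀ k ∈ Finset.range (j+1), |a k| ≤ A := fun k hk => by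
    rw [hA]; exact Finset.le_sup' (fun i => |a i|) hk
  have hA0 : 0 ≤ A :=
    le_trans (abs_nonneg (a 0)) (hAk 0 (Finset.mem_range.mpr (Nat.succ_pos j)))
  set W := ∑ k ∈ Finset.range (j+1), a k • w k with hW
  have hθ2sum : ∑ k ∈ Finset.range (j+1), A * (2 * θ k) ≤ A/16 := by
    have h1 : ∑ k ∈ Finset.range (j+1), A * (2 * θ k)
        = (2*A) * ∑ k ∈ Finset.range (j+1), θ k := by
      rw [Finset.mul_sum]; exact Finset.sum_congr rfl fun k _ => by ring
    rw [h1]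
    have := hθsum j
    nlinarith
  have hdiff : ‖∑ k ∈ Finset.range (j+1), a k • y k - ι W‖ ≤ A / 32 := by
    have h1 : ∑ k ∈ Finset.range (j+1), a k • y k - ι W
        = ∑ k ∈ Finset.range (j+1), a k • (y k - ι (w k)) := by
      rw [hW, hιsum j a, ← Finset.sum_sub_distrib]
      exact Finset.sum_congr rfl fun k _ => (smul_sub _ _ _).symm
    rw [h1]
    calc ‖∑ k ∈ Finset.range (j+1), a k • (y k - ι (w k))‖
        ≤ ∑ k ∈ Finset.range (j+1), ‖a k • (y k - ι (w k))‖ := norm_sum_le _ _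
      _ ≤ ∑ k ∈ Finset.range (j+1), A * θ k := by
          refine Finset.sum_le_sum fun k hk => ?_
          rw [norm_smul, Real.norm_eq_abs]
          exact mul_le_mul (hAk k hk) (le_trans (hyw k) (hδθ k)) (norm_nonneg _) hA0
      _ = A * ∑ k ∈ Finset.range (j+1), θ k := by rw [Finset.mul_sum]
      _ ≤ A * (1/32) := mul_le_mul_of_nonneg_left (hθsum j) hA0
      _ = A / 32 := by ring
  have hWm : ∀ m, ‖S W m‖ ≤ 2*A + A/16 := by
    intro m
    rw [hW, hswap j m a]
    set t := (Finset.range (j+1)).filter (fun k => g k < m ∧ m < g (k+1)) with ht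
    have htcard : t.card ≤ 1 := by
      rw [Finset.card_le_one]
      intro b hb c hc
      rw [ht, Finset.mem_filter] at hb hc
      obtain ⟨-, hb1, hb2⟩ := hb
      obtain ⟨-, hc1, hc2⟩ := hc
      by_contra hbc
      rcases Nat.lt_or_ge b c with h | h
      · have := pmono.monotone (show b+1 ≤ c by omega)
        omega
      · have := pmono.monotone (show c+1 ≤ b by omega)
        omega
    have htb : ∀ k ∈ t, ‖a k • S (w k) m‖ ≤ A * 2 := by
      intro k hk
      rw [ht, Finset.mem_filter] at hk
      rw [norm_smul, Real.norm_eq_abs]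
      exact mul_le_mul (hAk k hk.1) (hSbd k m) (norm_nonneg _) hA0
    have hcb : ∀ k ∈ (Finset.range (j+1)).filter (fun k => ¬(g k < m ∧ m < g (k+1))),
        ‖a k • S (w k) m‖ ≤ A * (2 * θ k) := by
      intro k hk
      rw [Finset.mem_filter] at hk
      obtain ⟨hk1, hk2⟩ := hk
      rcases Nat.lt_or_ge (g k) m with h | h
      · have h3 : g (k+1) ≤ m := by omega
        rw [hfull k m h3, norm_smul, Real.norm_eq_abs]
        exact mul_le_mul (hAk k hk1) (hQw k) (norm_nonneg _) hA0
      · rw [hzero k m h, smul_zero, norm_zero]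
        have := (hθpos k).le
        positivity
    calc ‖∑ k ∈ Finset.range (j+1), a k • S (w k) m‖
        ≤ ∑ k ∈ Finset.range (j+1), ‖a k • S (w k) m‖ := norm_sum_le _ _
      _ = (∑ k ∈ t, ‖a k • S (w k) m‖)
          + ∑ k ∈ (Finset.range (j+1)).filter (fun k => ¬(g k < m ∧ m < g (k+1))),
              ‖a k • S (w k) m‖ := by
          rw [ht]
          exact (Finset.sum_filter_add_sum_filter_not _ _ _).symm
      _ ≤ t.card • (A * 2)
          + ∑ k ∈ (Finset.range (j+1)).filter (fun k => ¬(g k < m ∧ m < g (k+1))),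
              A * (2 * θ k) :=
          add_le_add (Finset.sum_le_card_nsmul _ _ _ htb) (Finset.sum_le_sum hcb)
      _ ≤ 1 * (A * 2) + ∑ k ∈ Finset.range (j+1), A * (2 * θ k) := by
          refine add_le_add ?_ ?_
          · rw [nsmul_eq_mul]
            have h4 : (t.card : ℝ) ≤ 1 := by exact_mod_cast htcard
            nlinarith
          · refine Finset.sum_le_sum_of_subset_of_nonneg (Finset.filter_subset _ _)
              fun k _ _ => ?_
            have := (hθpos k).le
            positivity
      _ ≤ 2*A + A/16 := by
          have := hθ2sum
          linarith
  have hιW_le : ‖ι W‖ ≤ 2*A + A/16 := by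
    rw [hnormS]
    exact ciSup_le hWm
  have hupper : ‖∑ k ∈ Finset.range (j+1), a k • y k‖ ≤ 4 * A := by
    calc ‖∑ k ∈ Finset.range (j+1), a k • y k‖
        = ‖(∑ k ∈ Finset.range (j+1), a k • y k - ι W) + ι W‖ := by rw [sub_add_cancel]
      _ ≤ ‖∑ k ∈ Finset.range (j+1), a k • y k - ι W‖ + ‖ι W‖ := norm_add_le _ _
      _ ≤ A/32 + (2*A + A/16) := add_le_add hdiff hιW_le
      _ ≤ 4*A := by linarith
  -- lower bound
  obtain ⟨k', hk'mem, hk'⟩ :=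
    Finset.exists_mem_eq_sup' Finset.nonempty_range_add_one (fun k => |a k|)
  have h12 : (1:ℝ)/2 < ⨆ m, ‖S (w k') m‖ := by
    rw [← hnormS]
    have h1 := hwn_ge k'
    have h2 := hθ64 k'
    linarith
  obtain ⟨m, hm⟩ := (lt_ciSup_iff (hbdd (w k'))).mp h12
  have hm1 : g k' < m := by
    by_contra hc
    rw [hzero k' m (Nat.le_of_not_lt hc), norm_zero] at hm
    linarith
  have hm2 : m ≤ g (k'+1) := by
    by_contra hc
    rw [hfull k' m (by omega)] at hm
    have h3 := hQw k'
    have h4 := hθ64 k'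
    linarith
  have herase : ‖∑ k ∈ (Finset.range (j+1)).erase k', a k • S (w k) m‖ ≤ A/16 := by
    calc ‖∑ k ∈ (Finset.range (j+1)).erase k', a k • S (w k) m‖
        ≤ ∑ k ∈ (Finset.range (j+1)).erase k', ‖a k • S (w k) m‖ := norm_sum_le _ _
      _ ≤ ∑ k ∈ (Finset.range (j+1)).erase k', A * (2 * θ k) := by
          refine Finset.sum_le_sum fun k hk => ?_
          have hkne : k ≠ k' := Finset.ne_of_mem_erase hk
          have hkr : k ∈ Finset.range (j+1) := Finset.mem_of_mem_erase hk
          rcases Nat.lt_or_ge k k' with h | h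
          · have h5 : g (k+1) ≤ g k' := pmono.monotone (show k+1 ≤ k' by omega)
            rw [hfull k m (by omega), norm_smul, Real.norm_eq_abs]
            exact mul_le_mul (hAk k hkr) (hQw k) (norm_nonneg _) hA0
          · have h6 : k' < k := by omega
            have h7 : g (k'+1) ≤ g k := pmono.monotone (show k'+1 ≤ k by omega)
            rw [hzero k m (by omega), smul_zero, norm_zero]
            have := (hθpos k).le
            positivity
      _ ≤ ∑ k ∈ Finset.range (j+1), A * (2 * θ k) := by
          refine Finset.sum_le_sum_of_subset_of_nonneg (Finset.erase_subset _ _)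
            fun k _ _ => ?_
          have := (hθpos k).le
          positivity
      _ ≤ A/16 := hθ2sum
  have hSW_ge : A/2 - A/16 ≤ ‖S W m‖ := by
    rw [hW, hswap j m a,
      ← Finset.add_sum_erase _ (fun k => a k • S (w k) m) hk'mem]
    set c := ∑ k ∈ (Finset.range (j+1)).erase k', a k • S (w k) m with hc
    have h8 : ‖a k' • S (w k') m‖ ≤ ‖a k' • S (w k') m + c‖ + ‖c‖ := by
      calc ‖a k' • S (w k') m‖ = ‖(a k' • S (w k') m + c) - c‖ := by
            rw [add_sub_cancel_right]
        _ ≤ ‖a k' • S (w k') m + c‖ + ‖c‖ := norm_sub_le _ _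
    have h9 : A / 2 ≤ ‖a k' • S (w k') m‖ := by
      rw [norm_smul, Real.norm_eq_abs, ← hk']
      nlinarith
    linarith
  have hιW_ge : A/2 - A/16 ≤ ‖ι W‖ := le_trans hSW_ge (hS_le W m)
  constructor
  · -- lower estimate
    have h10 : ‖ι W‖ ≤ ‖∑ k ∈ Finset.range (j+1), a k • y k‖
        + ‖∑ k ∈ Finset.range (j+1), a k • y k - ι W‖ := by
      calc ‖ι W‖ = ‖∑ k ∈ Finset.range (j+1), a k • y k
            - (∑ k ∈ Finset.range (j+1), a k • y k - ι W)‖ := by rw [sub_sub_cancel]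
        _ ≤ _ := norm_sub_le _ _
    have : (4:ℝ)⁻¹ * A = A/4 := by ring
    rw [this]
    linarith
  · exact hupper
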